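/- There exists an arrangement of four equal circles in a circumscribed square whose coverage ratio strictly exceeds π/4; hence the mutually tangent arrangement does not maximize coverage ratio. -/

import Mathlib

open MeasureTheory Metric Real

noncomputable def pt (x y : ℝ) : EuclideanSpace ℝ (Fin 2) :=
  (WithLp.equiv 2 (Fin 2 → ℝ)).symm ![x, y]

@[simp] lemma pt_zero (x y : ℝ) : pt x y 0 = x := rfl
@[simp] lemma pt_one (x y : ℝ) : pt x y 1 = y := rfl

lemma mem_cb_iff {c : EuclideanSpace ℝ (Fin 2)} {r : ℝ} (hr : 0 ≤ r)
    (p : EuclideanSpace ℝ (Fin 2)) :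
    p ∈ closedBall c r ↔ (p 0 - c 0) ^ 2 + (p 1 - c 1) ^ 2 ≤ r ^ 2 := by
  rw [mem_closedBall, EuclideanSpace.dist_eq, Fin.sum_univ_two, Real.sqrt_le_iff]
  simp [Real.dist_eq, sq_abs, hr]

def Rect (x1 x2 y1 y2 : ℝ) : Set (EuclideanSpace ℝ (Fin 2)) :=
  {p | p 0 ∈ Set.Icc x1 x2 ∧ p 1 ∈ Set.Icc y1 y2}

lemma rect_eq (x1 x2 y1 y2 : ℝ) :
    Rect x1 x2 y1 y2 = (MeasurableEquiv.toLp 2 (Fin 2 → ℝ)).symm ⁻¹'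
      (Set.univ.pi fun i => Set.Icc (![x1, y1] i) (![x2, y2] i)) := by
  ext p
  simp only [Rect, Set.mem_setOf_eq, Set.mem_preimage, Set.mem_univ_pi, Set.mem_Icc,
    Fin.forall_fin_two,
    Matrix.cons_val_zero, Matrix.cons_val_one, Matrix.head_cons]
  exact Iff.rfl

lemma measurableSet_rect (x1 x2 y1 y2 : ℝ) : MeasurableSet (Rect x1 x2 y1 y2) := by
  rw [rect_eq]
  exact (MeasurableEquiv.toLp 2 (Fin 2 → ℝ)).symm.measurable
    (MeasurableSet.univ_pi fun i => measurableSet_Icc)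

lemma volume_rect (x1 x2 y1 y2 : ℝ) :
    volume (Rect x1 x2 y1 y2) = ENNReal.ofReal (x2 - x1) * ENNReal.ofReal (y2 - y1) := by
  rw [rect_eq, (EuclideanSpace.volume_preserving_symm_measurableEquiv_toLp (Fin 2)).measure_preimage
    (MeasurableSet.univ_pi fun i => measurableSet_Icc).nullMeasurableSet,
    volume_pi_pi, Fin.prod_univ_two]
  simp [Real.volume_Icc]

lemma vol_cb (c : EuclideanSpace ℝ (Fin 2)) (r : ℝ) (hr : 0 ≤ r) :
    volume (closedBall c r) = ENNReal.ofReal (r ^ 2 * π) := by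
  rw [EuclideanSpace.volume_closedBall]
  simp [Real.Gamma_two, ENNReal.ofReal_mul (by positivity : (0:ℝ) ≤ r ^ 2),
    Real.sq_sqrt Real.pi_nonneg, ← ENNReal.ofReal_pow hr, one_add_one_eq_two]

lemma lens_aux {s t : ℝ} (h1 : (s - 2501) ^ 2 + t ^ 2 ≤ 2501 ^ 2)
    (h2 : (s - 7499) ^ 2 + t ^ 2 ≤ 2501 ^ 2) :
    4998 ≤ s ∧ s ≤ 5002 ∧ -142 ≤ t ∧ t ≤ 142 := by
  have hs1 : 4998 ≤ s := by nlinarith [sq_nonneg t, sq_nonneg (s - 4998)]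
  have hs2 : s ≤ 5002 := by nlinarith [sq_nonneg t, sq_nonneg (s - 5002)]
  have ht : t ^ 2 ≤ 20164 := by
    nlinarith [mul_nonneg (by linarith : (0:ℝ) ≤ s - 4998) (by linarith : (0:ℝ) ≤ s - 4)]
  exact ⟨hs1, hs2, by nlinarith [sq_nonneg (t + 142)], by nlinarith [sq_nonneg (t - 142)]⟩

lemma diag_aux {x y : ℝ} (h1 : (x - 2501) ^ 2 + (y - 2501) ^ 2 ≤ 2501 ^ 2)
    (h2 : (x - 7499) ^ 2 + (y - 7499) ^ 2 ≤ 2501 ^ 2) : False := by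
  nlinarith [sq_nonneg (x - 2499 - 2501), sq_nonneg (y - 2499 - 2501)]

lemma diag_aux' {x y : ℝ} (h1 : (x - 7499) ^ 2 + (y - 2501) ^ 2 ≤ 2501 ^ 2)
    (h2 : (x - 2501) ^ 2 + (y - 7499) ^ 2 ≤ 2501 ^ 2) : False := by
  nlinarith [sq_nonneg (x - 5000), sq_nonneg (y - 5000)]

lemma in_square {x y : ℝ} (hx : 2501 ≤ x) (hx' : x ≤ 7499) (hy : 2501 ≤ y) (hy' : y ≤ 7499)
    {p : EuclideanSpace ℝ (Fin 2)} (hp : p ∈ closedBall (pt x y) 2501) :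
    ∀ j, p j ∈ Set.Icc (0 : ℝ) 10000 := by
  have h := (mem_cb_iff (by norm_num) p).1 hp
  simp only [pt_zero, pt_one] at h
  have h0 : p 0 ∈ Set.Icc (0 : ℝ) 10000 :=
    ⟨by nlinarith [sq_nonneg (p 0 - x), sq_nonneg (p 1 - y)],
     by nlinarith [sq_nonneg (p 0 - x), sq_nonneg (p 1 - y)]⟩
  have h1 : p 1 ∈ Set.Icc (0 : ℝ) 10000 :=
    ⟨by nlinarith [sq_nonneg (p 0 - x), sq_nonneg (p 1 - y)],
     by nlinarith [sq_nonneg (p 0 - x), sq_nonneg (p 1 - y)]⟩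
  intro j
  fin_cases j
  exacts [h0, h1]

/-- There exists an arrangement of four equal circles inside a square whose
coverage ratio strictly exceeds `π/4`; hence the mutually tangent arrangement
does not maximize the coverage ratio. -/
theorem exists_better_than_tangent_arrangement :
    ∃ (r L : ℝ) (c : Fin 4 → EuclideanSpace ℝ (Fin 2)), 0 < r ∧ 0 < L ∧
      (∀ i, closedBall (c i) r ⊆ {p : EuclideanSpace ℝ (Fin 2) |
        ∀ j, p j ∈ Set.Icc (0 : ℝ) L}) ∧
      (volume (⋃ i, closedBall (c i) r)).toReal / L ^ 2 > π / 4 := by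
  refine ⟨2501, 10000, ![pt 2501 2501, pt 7499 2501, pt 2501 7499, pt 7499 7499],
    by norm_num, by norm_num, ?_, ?_⟩
  · intro i
    fin_cases i <;> intro p hp <;>
      exact in_square (by norm_num) (by norm_num) (by norm_num) (by norm_num) hp
  · set c : Fin 4 → EuclideanSpace ℝ (Fin 2) :=
      ![pt 2501 2501, pt 7499 2501, pt 2501 7499, pt 7499 7499] with hc
    set B : Fin 4 → Set (EuclideanSpace ℝ (Fin 2)) := fun i => closedBall (c i) 2501 with hB
    set U : Set (EuclideanSpace ℝ (Fin 2)) :=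
      Rect 4998 5002 2359 2643 ∪ Rect 2359 2643 4998 5002 ∪
      Rect 7357 7641 4998 5002 ∪ Rect 4998 5002 7357 7641 with hU
    -- unfolded membership facts
    have hmem : ∀ (x y : ℝ) (p : EuclideanSpace ℝ (Fin 2)), p ∈ closedBall (pt x y) 2501 →
        (p 0 - x) ^ 2 + (p 1 - y) ^ 2 ≤ 2501 ^ 2 := by
      intro x y p hp
      have h := (mem_cb_iff (by norm_num) p).1 hp
      simpa using h
    have memU0 : ∀ p : EuclideanSpace ℝ (Fin 2),
        p ∈ Rect 4998 5002 2359 2643 → p ∈ U := fun p hp => by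
      rw [hU]; exact Or.inl (Or.inl (Or.inl hp))
    have memU1 : ∀ p : EuclideanSpace ℝ (Fin 2),
        p ∈ Rect 2359 2643 4998 5002 → p ∈ U := fun p hp => by
      rw [hU]; exact Or.inl (Or.inl (Or.inr hp))
    have memU2 : ∀ p : EuclideanSpace ℝ (Fin 2),
        p ∈ Rect 7357 7641 4998 5002 → p ∈ U := fun p hp => by
      rw [hU]; exact Or.inl (Or.inr hp)
    have memU3 : ∀ p : EuclideanSpace ℝ (Fin 2),
        p ∈ Rect 4998 5002 7357 7641 → p ∈ U := fun p hp => by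
      rw [hU]; exact Or.inr hp
    -- the six pairwise intersections are contained in U
    have h01 : ∀ p : EuclideanSpace ℝ (Fin 2), p ∈ closedBall (pt 2501 2501) 2501 →
        p ∈ closedBall (pt 7499 2501) 2501 → p ∈ U := by
      intro p hp0 hp1
      have ha := hmem _ _ _ hp0
      have hb := hmem _ _ _ hp1
      obtain ⟨k1, k2, k3, k4⟩ :=
        lens_aux (s := p 0) (t := p 1 - 2501) (by linarith) (by linarith)
      exact memU0 p ⟨⟨k1, k2⟩, by constructor <;> linarith⟩
    have h02 : ∀ p : EuclideanSpace ℝ (Fin 2), p ∈ closedBall (pt 2501 2501) 2501 →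
        p ∈ closedBall (pt 2501 7499) 2501 → p ∈ U := by
      intro p hp0 hp1
      have ha := hmem _ _ _ hp0
      have hb := hmem _ _ _ hp1
      obtain ⟨k1, k2, k3, k4⟩ :=
        lens_aux (s := p 1) (t := p 0 - 2501) (by linarith) (by linarith)
      exact memU1 p ⟨by constructor <;> linarith, k1, k2⟩
    have h13 : ∀ p : EuclideanSpace ℝ (Fin 2), p ∈ closedBall (pt 7499 2501) 2501 →
        p ∈ closedBall (pt 7499 7499) 2501 → p ∈ U := by
      intro p hp0 hp1
      have ha := hmem _ _ _ hp0
      have hb := hmem _ _ _ hp1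
      obtain ⟨k1, k2, k3, k4⟩ :=
        lens_aux (s := p 1) (t := p 0 - 7499) (by linarith) (by linarith)
      exact memU2 p ⟨by constructor <;> linarith, k1, k2⟩
    have h23 : ∀ p : EuclideanSpace ℝ (Fin 2), p ∈ closedBall (pt 2501 7499) 2501 →
        p ∈ closedBall (pt 7499 7499) 2501 → p ∈ U := by
      intro p hp0 hp1
      have ha := hmem _ _ _ hp0
      have hb := hmem _ _ _ hp1
      obtain ⟨k1, k2, k3, k4⟩ :=
        lens_aux (s := p 0) (t := p 1 - 7499) (by linarith) (by linarith)
      exact memU3 p ⟨⟨k1, k2⟩, by constructor <;> linarith⟩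
    have h03 : ∀ p : EuclideanSpace ℝ (Fin 2), p ∈ closedBall (pt 2501 2501) 2501 →
        p ∈ closedBall (pt 7499 7499) 2501 → p ∈ U := by
      intro p hp0 hp1
      exact (diag_aux (hmem _ _ _ hp0) (hmem _ _ _ hp1)).elim
    have h12 : ∀ p : EuclideanSpace ℝ (Fin 2), p ∈ closedBall (pt 7499 2501) 2501 →
        p ∈ closedBall (pt 2501 7499) 2501 → p ∈ U := by
      intro p hp0 hp1
      exact (diag_aux' (hmem _ _ _ hp0) (hmem _ _ _ hp1)).elim
    have hsub : ∀ i j, i ≠ j → B i ∩ B j ⊆ U := by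
      intro i j hij p hp
      fin_cases i <;> fin_cases j
      · exact absurd rfl hij
      · exact h01 p hp.1 hp.2
      · exact h02 p hp.1 hp.2
      · exact h03 p hp.1 hp.2
      · exact h01 p hp.2 hp.1
      · exact absurd rfl hij
      · exact h12 p hp.1 hp.2
      · exact h13 p hp.1 hp.2
      · exact h02 p hp.2 hp.1
      · exact h12 p hp.2 hp.1
      · exact absurd rfl hij
      · exact h23 p hp.1 hp.2
      · exact h03 p hp.2 hp.1
      · exact h13 p hp.2 hp.1
      · exact h23 p hp.2 hp.1
      · exact absurd rfl hij
    -- measurability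
    have hUmeas : MeasurableSet U :=
      (((measurableSet_rect _ _ _ _).union (measurableSet_rect _ _ _ _)).union
        (measurableSet_rect _ _ _ _)).union (measurableSet_rect _ _ _ _)
    have hDmeas : ∀ i, MeasurableSet (B i \ U) := fun i =>
      measurableSet_closedBall.diff hUmeas
    -- disjointness of the B i \ U
    have hdisj : Pairwise (Function.onFun Disjoint fun i => B i \ U) := by
      intro i j hij
      rw [Function.onFun, Set.disjoint_left]
      intro p hpi hpj
      exact hpi.2 (hsub i j hij ⟨hpi.1, hpj.1⟩)
    -- volume of U
    have hvolU : volume U ≤ ENNReal.ofReal 4544 := by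
      calc volume U ≤ volume (Rect 4998 5002 2359 2643 ∪ Rect 2359 2643 4998 5002 ∪
              Rect 7357 7641 4998 5002) + volume (Rect 4998 5002 7357 7641) :=
            measure_union_le _ _
        _ ≤ (volume (Rect 4998 5002 2359 2643 ∪ Rect 2359 2643 4998 5002) +
              volume (Rect 7357 7641 4998 5002)) + volume (Rect 4998 5002 7357 7641) :=
            add_le_add_left (measure_union_le _ _) _
        _ ≤ ((volume (Rect 4998 5002 2359 2643) + volume (Rect 2359 2643 4998 5002)) +
              volume (Rect 7357 7641 4998 5002)) + volume (Rect 4998 5002 7357 7641) :=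
            add_le_add_left (add_le_add_left (measure_union_le _ _) _) _
        _ = ENNReal.ofReal 4544 := by
            rw [volume_rect, volume_rect, volume_rect, volume_rect]
            rw [← ENNReal.ofReal_mul (by norm_num), ← ENNReal.ofReal_mul (by norm_num),
              ← ENNReal.ofReal_mul (by norm_num), ← ENNReal.ofReal_mul (by norm_num),
              ← ENNReal.ofReal_add (by norm_num) (by norm_num),
              ← ENNReal.ofReal_add (by norm_num) (by norm_num),
              ← ENNReal.ofReal_add (by norm_num) (by norm_num)]
            norm_num
    -- volume of each ball
    have hvolB : ∀ i, volume (B i) = ENNReal.ofReal (6255001 * π) := by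
      intro i
      have := vol_cb (c i) 2501 (by norm_num)
      rw [hB]
      rw [this]
      norm_num
    -- each ball volume bounded by piece + U
    have hBle : ∀ i, volume (B i) ≤ volume (B i \ U) + ENNReal.ofReal 4544 := by
      intro i
      calc volume (B i) ≤ volume ((B i \ U) ∪ U) := measure_mono (by
              intro p hp
              by_cases h : p ∈ U
              · exact Or.inr h
              · exact Or.inl ⟨hp, h⟩)
        _ ≤ volume (B i \ U) + volume U := measure_union_le _ _
        _ ≤ volume (B i \ U) + ENNReal.ofReal 4544 := add_le_add_right hvolU _
    -- sum of disjoint pieces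
    have hsum : volume (⋃ i, B i \ U) = ∑ i : Fin 4, volume (B i \ U) := by
      rw [measure_iUnion hdisj hDmeas, tsum_fintype]
    -- key lower bound
    have hkey : ENNReal.ofReal (25020004 * π) ≤
        volume (⋃ i, B i) + ENNReal.ofReal 18176 := by
      have h1 : ENNReal.ofReal (25020004 * π) = ∑ i : Fin 4, volume (B i) := by
        simp only [hvolB, Fin.sum_univ_four]
        rw [← ENNReal.ofReal_add (by positivity) (by positivity),
          ← ENNReal.ofReal_add (by positivity) (by positivity),
          ← ENNReal.ofReal_add (by positivity) (by positivity)]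
        ring_nf
      rw [h1]
      calc ∑ i : Fin 4, volume (B i)
          ≤ ∑ i : Fin 4, (volume (B i \ U) + ENNReal.ofReal 4544) :=
            Finset.sum_le_sum fun i _ => hBle i
        _ = (∑ i : Fin 4, volume (B i \ U)) + ENNReal.ofReal 18176 := by
            rw [Finset.sum_add_distrib]
            congr 1
            rw [Finset.sum_const]
            simp only [Finset.card_univ, Fintype.card_fin, nsmul_eq_mul]
            rw [show ((4 : ℕ) : ENNReal) = ENNReal.ofReal 4 by simp,
              ← ENNReal.ofReal_mul (by norm_num)]
            norm_num
        _ = volume (⋃ i, B i \ U) + ENNReal.ofReal 18176 := by rw [hsum]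
        _ ≤ volume (⋃ i, B i) + ENNReal.ofReal 18176 :=
            add_le_add_left
              (measure_mono (Set.iUnion_mono fun i => Set.diff_subset)) _
    -- finiteness
    have hfin : volume (⋃ i, B i) ≠ ⊤ := by
      refine ne_top_of_le_ne_top ?_ (measure_iUnion_le B)
      rw [tsum_fintype]
      simp only [hvolB, Fin.sum_univ_four]
      exact ENNReal.add_ne_top.2 ⟨ENNReal.add_ne_top.2 ⟨ENNReal.add_ne_top.2
        ⟨ENNReal.ofReal_ne_top, ENNReal.ofReal_ne_top⟩, ENNReal.ofReal_ne_top⟩,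
        ENNReal.ofReal_ne_top⟩
    -- conclude
    have hlow : 25020004 * π - 18176 ≤ (volume (⋃ i, B i)).toReal := by
      rw [← ENNReal.ofReal_le_iff_le_toReal hfin]
      rw [ENNReal.ofReal_sub _ (by norm_num)]
      exact tsub_le_iff_right.2 hkey
    rw [gt_iff_lt, lt_div_iff₀ (by norm_num : (0:ℝ) < 10000 ^ 2)]
    have hpi := Real.pi_gt_three
    nlinarith [hlow]
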